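/- Let I(g) = ∫₀^T ∫₀^{t₁} g(t₁)g(t₂) sin 2(t₁ - t₂) dt₂ dt₁ for T ≥ π. For g₂(t) = cos(4t)·χ_{[0,π]}(t), I(g₂) = -π/12. -/

import Mathlib

open Real intervalIntegral

lemma inner_calc (t₁ : ℝ) :
    (∫ t₂ in (0:ℝ)..t₁, Real.cos (4 * t₂) * Real.sin (2 * (t₁ - t₂)))
      = (Real.cos (2 * t₁) - Real.cos (4 * t₁)) / 6 := by
  have key : ∀ x ∈ Set.uIcc (0:ℝ) t₁, HasDerivAt
      (fun x => -(1/4) * Real.cos (2*t₁ + 2*x) + (1/12) * Real.cos (2*t₁ - 6*x))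
      (Real.cos (4 * x) * Real.sin (2 * (t₁ - x))) x := by
    intro x _
    have h1 : HasDerivAt (fun x : ℝ => 2*t₁ + 2*x) 2 x := by
      simpa using ((hasDerivAt_id x).const_mul 2).const_add (2*t₁)
    have h2 : HasDerivAt (fun x : ℝ => 2*t₁ - 6*x) (-6) x := by
      simpa using ((hasDerivAt_id x).const_mul 6).const_sub (2*t₁)
    have c1 := (Real.hasDerivAt_cos (2*t₁ + 2*x)).comp x h1
    have c2 := (Real.hasDerivAt_cos (2*t₁ - 6*x)).comp x h2
    have := (c1.const_mul (-(1/4) : ℝ)).add (c2.const_mul ((1/12) : ℝ))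
    convert this using 1
    · rfl
    · rfl
    · rfl
    have e1 : 2*t₁ + 2*x = 2*(t₁ - x) + 2*(2*x) := by ring
    have e2 : 2*t₁ - 6*x = 2*(t₁ - x) - 2*(2*x) := by ring
    have e3 : 4*x = 2*(2*x) := by ring
    rw [e1, e2, e3, Real.sin_add, Real.sin_sub]
    ring
  have := intervalIntegral.integral_eq_sub_of_hasDerivAt key
    (by apply Continuous.intervalIntegrable; continuity)
  rw [this]
  have : 2*t₁ - 6*0 = 2*t₁ := by ring
  rw [this]
  have : 2*t₁ + 2*t₁ = 4*t₁ := by ring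
  rw [this]
  have : 2*t₁ - 6*t₁ = -(4*t₁) := by ring
  rw [this, Real.cos_neg]
  have : 2*t₁ + 2*0 = 2*t₁ := by ring
  rw [this]
  ring

lemma outer_calc :
    (∫ t in (0:ℝ)..Real.pi, Real.cos (4*t) * ((Real.cos (2*t) - Real.cos (4*t)) / 6))
      = -(Real.pi / 12) := by
  have key : ∀ x ∈ Set.uIcc (0:ℝ) Real.pi, HasDerivAt
      (fun x => (1/72) * Real.sin (6*x) + (1/24) * Real.sin (2*x)
        - (1/96) * Real.sin (8*x) - x/12)
      (Real.cos (4*x) * ((Real.cos (2*x) - Real.cos (4*x)) / 6)) x := by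
    intro x _
    have d6 : HasDerivAt (fun x : ℝ => 6*x) 6 x := by
      simpa using (hasDerivAt_id x).const_mul 6
    have d2 : HasDerivAt (fun x : ℝ => 2*x) 2 x := by
      simpa using (hasDerivAt_id x).const_mul 2
    have d8 : HasDerivAt (fun x : ℝ => 8*x) 8 x := by
      simpa using (hasDerivAt_id x).const_mul 8
    have s6 := (Real.hasDerivAt_sin (6*x)).comp x d6
    have s2 := (Real.hasDerivAt_sin (2*x)).comp x d2
    have s8 := (Real.hasDerivAt_sin (8*x)).comp x d8
    have dx : HasDerivAt (fun x : ℝ => x/12) (1/12) x := by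
      simpa using (hasDerivAt_id x).div_const 12
    have := (((s6.const_mul ((1/72):ℝ)).add (s2.const_mul ((1/24):ℝ))).sub
      (s8.const_mul ((1/96):ℝ))).sub dx
    convert this using 1
    · rfl
    · rfl
    · rfl
    have A : Real.cos (6*x) = Real.cos (4*x) * Real.cos (2*x)
        - Real.sin (4*x) * Real.sin (2*x) := by
      rw [show (6:ℝ)*x = 4*x + 2*x from by ring, Real.cos_add]
    have B := Real.cos_sub (4*x) (2*x)
    rw [show (4:ℝ)*x - 2*x = 2*x from by ring] at B
    have C : Real.cos (8*x) = 2 * Real.cos (4*x)^2 - 1 := by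
      rw [show (8:ℝ)*x = 2*(4*x) from by ring, Real.cos_two_mul]
    rw [A, C]
    linear_combination (-(1/12:ℝ)) * B
  have := intervalIntegral.integral_eq_sub_of_hasDerivAt key
    (by apply Continuous.intervalIntegrable; continuity)
  rw [this]
  have h6 : Real.sin (6*Real.pi) = 0 := by simpa using Real.sin_nat_mul_pi 6
  have h2 : Real.sin (2*Real.pi) = 0 := by simpa using Real.sin_nat_mul_pi 2
  have h8 : Real.sin (8*Real.pi) = 0 := by simpa using Real.sin_nat_mul_pi 8
  rw [h6, h2, h8]
  norm_num

theorem stmt_12 (T : ℝ) (hT : Real.pi ≤ T)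
    (g : ℝ → ℝ)
    (hg : g = Set.indicator (Set.Icc 0 Real.pi) (fun t => Real.cos (4 * t))) :
    (∫ t₁ in (0 : ℝ)..T, ∫ t₂ in (0 : ℝ)..t₁,
        g t₁ * g t₂ * Real.sin (2 * (t₁ - t₂))) = -(Real.pi / 12) := by
  have hT0 : (0:ℝ) ≤ T := Real.pi_pos.le.trans hT
  set k : ℝ → ℝ := fun t => Real.cos (4*t) * ((Real.cos (2*t) - Real.cos (4*t)) / 6)
    with hk
  have hH : Set.EqOn (fun t₁ => ∫ t₂ in (0:ℝ)..t₁, g t₁ * g t₂ * Real.sin (2 * (t₁ - t₂)))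
      (Set.indicator {x | x ≤ Real.pi} k) (Set.uIcc (0:ℝ) T) := by
    intro t₁ ht₁
    rw [Set.uIcc_of_le hT0] at ht₁
    by_cases h : t₁ ≤ Real.pi
    · have ht₁0 : (0:ℝ) ≤ t₁ := ht₁.1
      have hcongr : Set.EqOn (fun t₂ => g t₁ * g t₂ * Real.sin (2 * (t₁ - t₂)))
          (fun t₂ => Real.cos (4*t₁) * (Real.cos (4*t₂) * Real.sin (2 * (t₁ - t₂))))
          (Set.uIcc (0:ℝ) t₁) := by
        intro t₂ ht₂
        rw [Set.uIcc_of_le ht₁0] at ht₂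
        simp only
        rw [hg, Set.indicator_of_mem (Set.mem_Icc.mpr ⟨ht₁0, h⟩), Set.indicator_of_mem (Set.mem_Icc.mpr ⟨ht₂.1, ht₂.2.trans h⟩)]
        ring
      simp only
      rw [intervalIntegral.integral_congr hcongr, intervalIntegral.integral_const_mul,
        inner_calc, Set.indicator_of_mem (by exact h : t₁ ∈ {x | x ≤ Real.pi})]
    · have hg1 : g t₁ = 0 := by
        rw [hg, Set.indicator_of_notMem (by simp [h])]
      simp only [hg1, zero_mul, intervalIntegral.integral_zero]
      rw [Set.indicator_of_notMem (by simpa using h)]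
  rw [intervalIntegral.integral_congr hH,
    intervalIntegral.integral_indicator ⟨Real.pi_pos.le, hT⟩]
  exact outer_calc
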